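/- Let γ > 1 and v* > 0. There exist constants C > 0 and δ* > 0 such that for any δ ∈ (0, δ*) and any v, w > 0 with |p(w) − p(v*)| ≤ δ and such that either Q(v|w) < δ or |p(v) − p(w)| < δ, one has (p(v) − p(w))² ≤ C · Q(v|w). -/

import Mathlib

open MeasureTheory Real Set

/-- Pressure `p(v) = v^(-γ)`. -/
noncomputable def pres (γ v : ℝ) : ℝ := v ^ (-γ)

/-- Internal energy `Q(v) = v^(1-γ)/(γ-1)`. -/
noncomputable def Qint (γ v : ℝ) : ℝ := v ^ (1 - γ) / (γ - 1)

/-- Relative internal energy `Q(v|w) = Q(v) - Q(w) - Q'(w)(v-w)`, with `Q'(w) = -p(w)`. -/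
noncomputable def Qrel (γ v w : ℝ) : ℝ := Qint γ v - Qint γ w + pres γ w * (v - w)

lemma pres_pos (γ : ℝ) {v : ℝ} (hv : 0 < v) : 0 < pres γ v :=
  Real.rpow_pos_of_pos hv _

lemma pres_anti (γ : ℝ) (hγ0 : 0 < γ) {x y : ℝ} (hx : 0 < x) (hxy : x ≤ y) :
    pres γ y ≤ pres γ x :=
  Real.rpow_le_rpow_of_nonpos hx hxy (by linarith)

lemma Qrel_self (γ w : ℝ) : Qrel γ w w = 0 := by simp [Qrel]

lemma pres_hasDerivAt (γ : ℝ) {x : ℝ} (hx : 0 < x) :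
    HasDerivAt (pres γ) (-γ * x ^ (-γ - 1)) x := by
  have h := Real.hasDerivAt_rpow_const (p := -γ) (Or.inl hx.ne')
  exact (by simpa using h : HasDerivAt (fun x => x ^ (-γ)) (-γ * x ^ (-γ - 1)) x)

lemma Qint_hasDerivAt (γ : ℝ) (hγ : 1 < γ) {x : ℝ} (hx : 0 < x) :
    HasDerivAt (fun t => Qint γ t) (-pres γ x) x := by
  have h1 : HasDerivAt (fun t : ℝ => t ^ (1 - γ)) ((1 - γ) * x ^ (1 - γ - 1)) x :=
    Real.hasDerivAt_rpow_const (Or.inl hx.ne')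
  have h2 := h1.div_const (γ - 1)
  have he : (1 - γ) * x ^ (1 - γ - 1) / (γ - 1) = -pres γ x := by
    rw [show (1 - γ - 1 : ℝ) = -γ by ring, pres,
      div_eq_iff (show γ - 1 ≠ 0 by intro h; linarith)]
    ring
  rw [← he]
  exact h2

lemma Qrel_hasDerivAt (γ : ℝ) (hγ : 1 < γ) (w : ℝ) {x : ℝ} (hx : 0 < x) :
    HasDerivAt (fun t => Qrel γ t w) (pres γ w - pres γ x) x := by
  have h1 := Qint_hasDerivAt γ hγ hx
  have h2 : HasDerivAt (fun t : ℝ => pres γ w * (t - w)) (pres γ w) x := by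
    simpa using ((hasDerivAt_id x).sub_const w).const_mul (pres γ w)
  have h4 := (h1.sub_const (Qint γ w)).add h2
  rw [show pres γ w - pres γ x = -pres γ x + pres γ w by ring]
  exact h4

lemma pres_mvt (γ : ℝ) (hγ : 1 < γ) {x y : ℝ} (hx : 0 < x) (hxy : x < y) :
    ∃ c, x < c ∧ c < y ∧ pres γ x - pres γ y = γ * c ^ (-γ - 1) * (y - x) := by
  obtain ⟨c, hc, heq⟩ := exists_hasDerivAt_eq_slope (pres γ) (fun t => -γ * t ^ (-γ - 1)) hxy
    (fun z hz => ((pres_hasDerivAt γ (lt_of_lt_of_le hx hz.1)).continuousAt).continuousWithinAt)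
    (fun z hz => pres_hasDerivAt γ (lt_trans hx hz.1))
  refine ⟨c, hc.1, hc.2, ?_⟩
  have hne : y - x ≠ 0 := sub_ne_zero.mpr hxy.ne'
  have h := (div_eq_iff hne).mp heq.symm
  linear_combination -h

lemma Qrel_mvt (γ : ℝ) (hγ : 1 < γ) (w : ℝ) {x y : ℝ} (hx : 0 < x) (hxy : x < y) :
    ∃ c, x < c ∧ c < y ∧ Qrel γ y w - Qrel γ x w = (pres γ w - pres γ c) * (y - x) := by
  obtain ⟨c, hc, heq⟩ := exists_hasDerivAt_eq_slope (fun t => Qrel γ t w)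
    (fun t => pres γ w - pres γ t) hxy
    (fun z hz => ((Qrel_hasDerivAt γ hγ w (lt_of_lt_of_le hx hz.1)).continuousAt).continuousWithinAt)
    (fun z hz => Qrel_hasDerivAt γ hγ w (lt_trans hx hz.1))
  refine ⟨c, hc.1, hc.2, ?_⟩
  have hne : y - x ≠ 0 := sub_ne_zero.mpr hxy.ne'
  have h := (div_eq_iff hne).mp heq.symm
  linear_combination h

lemma pres_lip (γ : ℝ) (hγ : 1 < γ) {m M x y : ℝ} (hm : 0 < m) (hmx : m ≤ x)
    (hxy : x ≤ y) (hyM : y ≤ M) :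
    γ * M ^ (-γ - 1) * (y - x) ≤ pres γ x - pres γ y ∧
      pres γ x - pres γ y ≤ γ * m ^ (-γ - 1) * (y - x) := by
  have hγ0 : (0:ℝ) < γ := by linarith
  rcases eq_or_lt_of_le hxy with rfl | h
  · simp
  · obtain ⟨c, hc1, hc2, heq⟩ := pres_mvt γ hγ (hm.trans_le hmx) h
    have hcpos : 0 < c := by linarith
    have hub : c ^ (-γ - 1) ≤ m ^ (-γ - 1) :=
      Real.rpow_le_rpow_of_nonpos hm (by linarith) (by linarith)
    have hlb : M ^ (-γ - 1) ≤ c ^ (-γ - 1) :=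
      Real.rpow_le_rpow_of_nonpos hcpos (by linarith) (by linarith)
    constructor
    · rw [heq]
      exact mul_le_mul_of_nonneg_right (mul_le_mul_of_nonneg_left hlb hγ0.le) (by linarith)
    · rw [heq]
      exact mul_le_mul_of_nonneg_right (mul_le_mul_of_nonneg_left hub hγ0.le) (by linarith)

lemma Qrel_quad (γ : ℝ) (hγ : 1 < γ) {m M v w : ℝ} (hm : 0 < m) (hvm : m ≤ v)
    (hvM : v ≤ M) (hwm : m ≤ w) (hwM : w ≤ M) :
    γ * M ^ (-γ - 1) / 2 * (v - w) ^ 2 ≤ Qrel γ v w := by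
  have hγ0 : (0:ℝ) < γ := by linarith
  have hw0 : 0 < w := hm.trans_le hwm
  have hv0 : 0 < v := hm.trans_le hvm
  rcases lt_trichotomy v w with h | rfl | h
  · obtain ⟨c, hc, heq⟩ := exists_ratio_hasDerivAt_eq_ratio_slope
      (fun t => Qrel γ t w) (fun t => pres γ w - pres γ t) h
      (fun z hz => ((Qrel_hasDerivAt γ hγ w (lt_of_lt_of_le hv0 hz.1)).continuousAt).continuousWithinAt)
      (fun z hz => Qrel_hasDerivAt γ hγ w (lt_trans hv0 hz.1))
      (fun t => (t - w) ^ 2) (fun t => 2 * (t - w))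
      ((continuous_id.sub continuous_const).pow 2).continuousOn
      (fun z _ => by simpa using ((hasDerivAt_id z).sub_const w).fun_pow 2)
    obtain ⟨hc1, hc2⟩ := hc
    have hlip := (pres_lip γ hγ hm (le_of_lt (lt_of_le_of_lt hvm hc1)) hc2.le hwM).1
    simp only [Qrel_self] at heq
    nlinarith [heq, mul_le_mul_of_nonneg_left hlip (sq_nonneg (v - w)), sq_nonneg (v - w),
      hc1, hc2]
  · simp [Qrel_self]
  · obtain ⟨c, hc, heq⟩ := exists_ratio_hasDerivAt_eq_ratio_slope
      (fun t => Qrel γ t w) (fun t => pres γ w - pres γ t) h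
      (fun z hz => ((Qrel_hasDerivAt γ hγ w (lt_of_lt_of_le hw0 hz.1)).continuousAt).continuousWithinAt)
      (fun z hz => Qrel_hasDerivAt γ hγ w (lt_trans hw0 hz.1))
      (fun t => (t - w) ^ 2) (fun t => 2 * (t - w))
      ((continuous_id.sub continuous_const).pow 2).continuousOn
      (fun z _ => by simpa using ((hasDerivAt_id z).sub_const w).fun_pow 2)
    obtain ⟨hc1, hc2⟩ := hc
    have hlip := (pres_lip γ hγ hm hwm hc1.le (le_of_lt (lt_of_lt_of_le hc2 hvM))).1
    simp only [Qrel_self] at heq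
    nlinarith [heq, mul_le_mul_of_nonneg_left hlip (sq_nonneg (v - w)), sq_nonneg (v - w),
      hc1, hc2]

lemma vol_lb (γ : ℝ) (hγ0 : 0 < γ) {x K : ℝ} (hx : 0 < x) (hK : 0 < K)
    (h : pres γ x ≤ K) : K ^ (-(1/γ)) ≤ x := by
  by_contra h'
  push_neg at h'
  have h1 : pres γ (K ^ (-(1/γ))) = K := by
    rw [pres, ← Real.rpow_mul hK.le, show -(1/γ) * -γ = 1 by field_simp, Real.rpow_one]
  have h2 : pres γ (K ^ (-(1/γ))) < pres γ x := by
    simpa [pres] using Real.rpow_lt_rpow_of_neg hx h' (neg_lt_zero.mpr hγ0)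
  rw [h1] at h2
  linarith

lemma vol_ub (γ : ℝ) (hγ0 : 0 < γ) {x K : ℝ} (hx : 0 < x) (hK : 0 < K)
    (h : K ≤ pres γ x) : x ≤ K ^ (-(1/γ)) := by
  by_contra h'
  push_neg at h'
  have h1 : pres γ (K ^ (-(1/γ))) = K := by
    rw [pres, ← Real.rpow_mul hK.le, show -(1/γ) * -γ = 1 by field_simp, Real.rpow_one]
  have h2 : pres γ x < pres γ (K ^ (-(1/γ))) := by
    simpa [pres] using Real.rpow_lt_rpow_of_neg (Real.rpow_pos_of_pos hK _) h'
      (neg_lt_zero.mpr hγ0)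
  rw [h1] at h2
  linarith

set_option maxHeartbeats 1600000 in
/-- Lemma A.3 (estimate (A.8)): the squared pressure difference is controlled by the
relative internal energy under a smallness condition. -/
theorem pressure_controlled_by_entropy (γ vstar : ℝ) (hγ : 1 < γ) (hvstar : 0 < vstar) :
    ∃ C δstar : ℝ, 0 < C ∧ 0 < δstar ∧
      ∀ δ : ℝ, 0 < δ → δ < δstar →
      ∀ v w : ℝ, 0 < v → 0 < w →
        |pres γ w - pres γ vstar| ≤ δ →
        (Qrel γ v w < δ ∨ |pres γ v - pres γ w| < δ) →
        (pres γ v - pres γ w) ^ 2 ≤ C * Qrel γ v w := by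
  have hγ0 : (0:ℝ) < γ := by linarith
  obtain ⟨pstar, hpstar_def⟩ : ∃ p, p = pres γ vstar := ⟨_, rfl⟩
  have hps : 0 < pstar := hpstar_def ▸ pres_pos γ hvstar
  obtain ⟨a, ha_def⟩ : ∃ a, a = ((3/2) * pstar) ^ (-(1/γ)) := ⟨_, rfl⟩
  obtain ⟨b, hb_def⟩ : ∃ b, b = (pstar/2) ^ (-(1/γ)) := ⟨_, rfl⟩
  have ha : 0 < a := ha_def ▸ Real.rpow_pos_of_pos (by linarith) _
  have hb : 0 < b := hb_def ▸ Real.rpow_pos_of_pos (by linarith) _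
  have hab : a ≤ b := by
    rw [ha_def, hb_def]
    exact le_of_lt (Real.rpow_lt_rpow_of_neg (by linarith) (by linarith)
      (neg_lt_zero.mpr (div_pos one_pos hγ0)))
  obtain ⟨m, hm_def⟩ : ∃ m, m = a / 2 := ⟨_, rfl⟩
  obtain ⟨M, hM_def⟩ : ∃ M, M = 2 * b := ⟨_, rfl⟩
  have hm : 0 < m := by rw [hm_def]; linarith
  have hM : 0 < M := by rw [hM_def]; linarith
  obtain ⟨L1, hL1_def⟩ : ∃ L, L = γ * M ^ (-γ - 1) := ⟨_, rfl⟩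
  obtain ⟨L2, hL2_def⟩ : ∃ L, L = γ * m ^ (-γ - 1) := ⟨_, rfl⟩
  have hL1 : 0 < L1 := hL1_def ▸ mul_pos hγ0 (Real.rpow_pos_of_pos hM _)
  have hL2 : 0 < L2 := hL2_def ▸ mul_pos hγ0 (Real.rpow_pos_of_pos hm _)
  refine ⟨2 * L2 ^ 2 / L1, min (pstar/4) (L1 * a ^ 2 / 8),
    div_pos (mul_pos two_pos (pow_pos hL2 2)) hL1,
    lt_min (by linarith) (div_pos (mul_pos hL1 (pow_pos ha 2)) (by norm_num)), ?_⟩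
  intro δ hδ hδs v w hv hw hpw hor
  rw [← hpstar_def] at hpw
  have hδ1 : δ < pstar / 4 := lt_of_lt_of_le hδs (min_le_left _ _)
  have hδ2 : δ < L1 * a ^ 2 / 8 := lt_of_lt_of_le hδs (min_le_right _ _)
  obtain ⟨hpwl, hpwu⟩ := abs_le.mp hpw
  have hwa : a ≤ w := by
    rw [ha_def]; exact vol_lb γ hγ0 hw (by linarith) (by linarith)
  have hwb : w ≤ b := by
    rw [hb_def]; exact vol_ub γ hγ0 hw (by linarith) (by linarith)
  have hwm : m ≤ w := by rw [hm_def]; linarith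
  have hwM : w ≤ M := by rw [hM_def]; linarith
  have hvmM : m ≤ v ∧ v ≤ M := by
    rcases hor with hQ | hP
    · constructor
      · by_contra h'
        push_neg at h'
        obtain ⟨c, hc1, hc2, heq⟩ := Qrel_mvt γ hγ w hv h'
        have hpc : pres γ w ≤ pres γ c := pres_anti γ hγ0 (by linarith) (by linarith)
        have h1 : Qrel γ m w ≤ Qrel γ v w := by
          nlinarith [heq, mul_nonneg (sub_nonneg.mpr hpc) (by linarith : (0:ℝ) ≤ m - v)]
        have h2 : L1 / 2 * (m - w) ^ 2 ≤ Qrel γ m w := by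
          have := Qrel_quad γ hγ hm le_rfl (by linarith) hwm hwM
          rw [← hL1_def] at this
          exact this
        have hwm2 : a / 2 ≤ w - m := by rw [hm_def]; linarith
        have hsq : (a/2) ^ 2 ≤ (m - w) ^ 2 := by
          calc (a/2) ^ 2 ≤ (w - m) ^ 2 := pow_le_pow_left₀ (by linarith) hwm2 2
            _ = (m - w) ^ 2 := by ring
        have h4 := mul_le_mul_of_nonneg_left hsq (by linarith : (0:ℝ) ≤ L1 / 2)
        linarith [h1, h2, hQ, hδ2, h4]
      · by_contra h'
        push_neg at h'
        obtain ⟨c, hc1, hc2, heq⟩ := Qrel_mvt γ hγ w hM h'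
        have hpc : pres γ c ≤ pres γ w := pres_anti γ hγ0 hw (by linarith)
        have h1 : Qrel γ M w ≤ Qrel γ v w := by
          nlinarith [heq, mul_nonneg (sub_nonneg.mpr hpc) (by linarith : (0:ℝ) ≤ v - M)]
        have h2 : L1 / 2 * (M - w) ^ 2 ≤ Qrel γ M w := by
          have := Qrel_quad γ hγ hm (le_trans hwm hwM) le_rfl hwm hwM
          rw [← hL1_def] at this
          exact this
        have hMw2 : b ≤ M - w := by rw [hM_def]; linarith
        have hsq : a ^ 2 ≤ (M - w) ^ 2 := pow_le_pow_left₀ ha.le (by linarith) 2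
        have h4 := mul_le_mul_of_nonneg_left hsq (by linarith : (0:ℝ) ≤ L1 / 2)
        linarith [h1, h2, hQ, hδ2, h4]
    · obtain ⟨hpl, hpu⟩ := abs_lt.mp hP
      have hva : a ≤ v := by
        rw [ha_def]; exact vol_lb γ hγ0 hv (by linarith) (by linarith)
      have hvb : v ≤ b := by
        rw [hb_def]; exact vol_ub γ hγ0 hv (by linarith) (by linarith)
      constructor
      · rw [hm_def]; linarith
      · rw [hM_def]; linarith
  obtain ⟨hvm, hvM⟩ := hvmM
  have hquad : L1 / 2 * (v - w) ^ 2 ≤ Qrel γ v w := by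
    have := Qrel_quad γ hγ hm hvm hvM hwm hwM
    rw [← hL1_def] at this
    exact this
  have hlip : (pres γ v - pres γ w) ^ 2 ≤ L2 ^ 2 * (v - w) ^ 2 := by
    rcases le_total v w with h | h
    · obtain ⟨hl, hu⟩ := pres_lip γ hγ hm hvm h hwM
      rw [← hL1_def] at hl
      rw [← hL2_def] at hu
      nlinarith [hl, hu, mul_nonneg hL1.le (sub_nonneg.mpr h)]
    · obtain ⟨hl, hu⟩ := pres_lip γ hγ hm hwm h hvM
      rw [← hL1_def] at hl
      rw [← hL2_def] at hu
      nlinarith [hl, hu, mul_nonneg hL1.le (sub_nonneg.mpr h)]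
  have hC : (0:ℝ) < 2 * L2 ^ 2 / L1 := div_pos (mul_pos two_pos (pow_pos hL2 2)) hL1
  have h3 : 2 * L2 ^ 2 / L1 * (L1 / 2 * (v - w) ^ 2) = L2 ^ 2 * (v - w) ^ 2 := by
    field_simp
  linarith [mul_le_mul_of_nonneg_left hquad hC.le, h3, hlip]
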